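/- Let Ω ⊆ ℝ^N be measurable with finite Lebesgue measure. For each n let f_n ∈ L¹(Ω) be measurable with f_n(x) > 0 for almost every x ∈ Ω, and let h ∈ L¹(Ω) be such that ∫_E f_n → ∫_E h as n → ∞ for every measurable set E ⊆ Ω (in particular, this holds if f_n converges to h weakly in L¹(Ω)). Let γ : ℝ → [0, +∞] be a Borel function such that γ(t) → +∞ as t → 0⁺ (limit along the filter of positive reals tending to 0), and assume sup_n ∫⁻_Ω γ(f_n(x)) dx < +∞. Then h(x) > 0 for almost every x ∈ Ω. -/

import Mathlib

open MeasureTheory Filter Topology Set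
open scoped ENNReal

noncomputable section

/-- Positivity of the weak `L¹` limit of positive Jacobians under a coercivity bound:
if `γ(t) → +∞` as `t → 0⁺` and `sup_n ∫ γ(f_n) < ∞`, then the setwise limit `h` of the
`f_n` is positive almost everywhere. -/
theorem positivity_of_weak_limit {N : ℕ}
    (Ω : Set (EuclideanSpace ℝ (Fin N))) (hΩ : MeasurableSet Ω) (hΩfin : volume Ω < ⊤)
    (f : ℕ → EuclideanSpace ℝ (Fin N) → ℝ)
    (hmeas : ∀ n, Measurable (f n))
    (hint : ∀ n, IntegrableOn (f n) Ω volume)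
    (hpos : ∀ n, ∀ᵐ x ∂(volume.restrict Ω), 0 < f n x)
    (h : EuclideanSpace ℝ (Fin N) → ℝ) (hh : IntegrableOn h Ω volume)
    (hconv : ∀ E : Set (EuclideanSpace ℝ (Fin N)), E ⊆ Ω → MeasurableSet E →
      Tendsto (fun n => ∫ x in E, f n x) atTop (𝓝 (∫ x in E, h x)))
    (γ : ℝ → ℝ≥0∞) (hγ : Measurable γ)
    (hγlim : Tendsto γ (𝓝[>] (0 : ℝ)) (𝓝 ⊤))
    (hbound : (⨆ n, ∫⁻ x in Ω, γ (f n x)) < ⊤) :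
    ∀ᵐ x ∂(volume.restrict Ω), 0 < h x := by
  obtain ⟨g, hgmeas, hae⟩ : ∃ g, Measurable g ∧ h =ᵐ[volume.restrict Ω] g :=
    ⟨hh.1.mk h, hh.1.stronglyMeasurable_mk.measurable, hh.1.ae_eq_mk⟩
  set E' : Set (EuclideanSpace ℝ (Fin N)) := {x | g x ≤ 0} with hE'def
  have hE' : MeasurableSet E' := measurableSet_le hgmeas measurable_const
  set E : Set (EuclideanSpace ℝ (Fin N)) := E' ∩ Ω with hEdef
  have hEmeas : MeasurableSet E := hE'.inter hΩ
  have hEsub : E ⊆ Ω := inter_subset_right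
  have hEfin : volume E ≠ ⊤ := (lt_of_le_of_lt (measure_mono hEsub) hΩfin).ne
  set C := ⨆ n, ∫⁻ x in Ω, γ (f n x) with hCdef
  have hCtop : C ≠ ⊤ := hbound.ne
  -- main claim
  have main : volume E = 0 := by
    have key : ∀ ε : ℝ, 0 < ε → (volume E).toReal ≤ ε := by
      intro ε hε
      set M : ℝ := C.toReal / ε + 1 with hMdef
      have hM0 : 0 < M := by positivity
      set M' : ℝ≥0∞ := ENNReal.ofReal M with hM'def
      have hM'0 : M' ≠ 0 := by
        simp [hM'def, ENNReal.ofReal_eq_zero, not_le, hM0]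
      have hM'top : M' ≠ ⊤ := ENNReal.ofReal_ne_top
      have hev : ∀ᶠ t in 𝓝[>] (0 : ℝ), γ t ∈ Ioi M' :=
        hγlim.eventually_mem (Ioi_mem_nhds hM'top.lt_top)
      rw [eventually_nhdsWithin_iff] at hev
      obtain ⟨δ, hδ0, hδ⟩ := Metric.eventually_nhds_iff.mp hev
      have hδ' : ∀ t : ℝ, 0 < t → t < δ → M' ≤ γ t := by
        intro t ht htδ
        exact le_of_lt (hδ (by rw [Real.dist_eq, sub_zero, abs_of_pos ht]; exact htδ) ht)
      set S : ℕ → Set (EuclideanSpace ℝ (Fin N)) := fun n => {x | f n x < δ} with hSdef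
      have hS : ∀ n, MeasurableSet (S n) := fun n => measurableSet_lt (hmeas n) measurable_const
      -- Step A : volume (E ∩ S n) ≤ C / M'
      have stepA : ∀ n, volume (E ∩ S n) ≤ C / M' := by
        intro n
        have hsub : E ∩ S n ⊆ Ω := inter_subset_left.trans hEsub
        have hASmeas : MeasurableSet (E ∩ S n) := hEmeas.inter (hS n)
        have hmem : ∀ᵐ x ∂(volume.restrict (E ∩ S n)), M' ≤ γ (f n x) := by
          have h1 : ∀ᵐ x ∂(volume.restrict (E ∩ S n)), 0 < f n x :=
            ae_restrict_of_ae_restrict_of_subset hsub (hpos n)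
          have h2 : ∀ᵐ x ∂(volume.restrict (E ∩ S n)), x ∈ E ∩ S n :=
            ae_restrict_mem hASmeas
          filter_upwards [h1, h2] with x hx1 hx2
          exact hδ' _ hx1 hx2.2
        have hcalc : M' * volume (E ∩ S n) ≤ C := by
          calc M' * volume (E ∩ S n) = ∫⁻ _ in E ∩ S n, M' := (setLIntegral_const _ _).symm
            _ ≤ ∫⁻ x in E ∩ S n, γ (f n x) := lintegral_mono_ae hmem
            _ ≤ ∫⁻ x in Ω, γ (f n x) := lintegral_mono_set hsub
            _ ≤ C := le_iSup (fun n => ∫⁻ x in Ω, γ (f n x)) n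
        rw [ENNReal.le_div_iff_mul_le (Or.inl hM'0) (Or.inl hM'top)]
        rwa [mul_comm]
      have hCM'top : C / M' ≠ ⊤ := (ENNReal.div_lt_top hCtop hM'0).ne
      -- Step B : lower bound for ∫ x in E, f n x
      set L : ℝ := δ * ((volume E).toReal - (C / M').toReal) with hLdef
      have stepB : ∀ n, L ≤ ∫ x in E, f n x := by
        intro n
        have hAmeas : MeasurableSet (E ∩ S n) := hEmeas.inter (hS n)
        have hBmeas : MeasurableSet (E \ S n) := hEmeas.diff (hS n)
        have hAsub : E ∩ S n ⊆ Ω := inter_subset_left.trans hEsub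
        have hBsub : E \ S n ⊆ Ω := diff_subset.trans hEsub
        have hIA : IntegrableOn (f n) (E ∩ S n) volume := (hint n).mono_set hAsub
        have hIB : IntegrableOn (f n) (E \ S n) volume := (hint n).mono_set hBsub
        have hdisj : Disjoint (E ∩ S n) (E \ S n) :=
          disjoint_sdiff_self_right.mono_left inter_subset_right
        have hsplit : ∫ x in E, f n x = (∫ x in E ∩ S n, f n x) + ∫ x in E \ S n, f n x := by
          rw [← setIntegral_union hdisj hBmeas hIA hIB, inter_union_diff]
        have hA0 : 0 ≤ ∫ x in E ∩ S n, f n x := by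
          apply setIntegral_nonneg_of_ae_restrict
          filter_upwards [ae_restrict_of_ae_restrict_of_subset hAsub (hpos n)] with x hx
          exact hx.le
        have hBfin : volume (E \ S n) ≠ ⊤ :=
          (lt_of_le_of_lt (measure_mono diff_subset) (hEfin.lt_top)).ne
        have hBlow : δ * (volume (E \ S n)).toReal ≤ ∫ x in E \ S n, f n x := by
          apply setIntegral_ge_of_const_le_real hBmeas hBfin
          · intro x hx
            exact not_lt.mp hx.2
          · exact hIB
        have hmeasure : (volume E).toReal - (C / M').toReal ≤ (volume (E \ S n)).toReal := by
          have hsum : volume (E ∩ S n) + volume (E \ S n) = volume E :=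
            measure_inter_add_diff E (hS n)
          have hAfin : volume (E ∩ S n) ≠ ⊤ :=
            (lt_of_le_of_lt (measure_mono inter_subset_left) hEfin.lt_top).ne
          have h1 : (volume E).toReal = (volume (E ∩ S n)).toReal + (volume (E \ S n)).toReal := by
            rw [← ENNReal.toReal_add hAfin hBfin, hsum]
          have h2 : (volume (E ∩ S n)).toReal ≤ (C / M').toReal :=
            ENNReal.toReal_mono hCM'top (stepA n)
          linarith
        calc L ≤ δ * (volume (E \ S n)).toReal := by
              apply mul_le_mul_of_nonneg_left hmeasure hδ0.le
          _ ≤ ∫ x in E \ S n, f n x := hBlow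
          _ ≤ (∫ x in E ∩ S n, f n x) + ∫ x in E \ S n, f n x := by linarith
          _ = ∫ x in E, f n x := hsplit.symm
      -- pass to the limit
      have hlim : L ≤ ∫ x in E, h x :=
        ge_of_tendsto (hconv E hEsub hEmeas) (Eventually.of_forall stepB)
      have hEh : ∫ x in E, h x ≤ 0 := by
        have hgE : ∫ x in E, h x = ∫ x in E, g x :=
          integral_congr_ae (ae_restrict_of_ae_restrict_of_subset hEsub hae)
        rw [hgE]
        exact setIntegral_nonpos hEmeas fun x hx => hx.1
      have hvE : (volume E).toReal ≤ (C / M').toReal := by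
        have : L ≤ 0 := hlim.trans hEh
        rw [hLdef] at this
        nlinarith [hδ0]
      have : (C / M').toReal ≤ ε := by
        rw [ENNReal.toReal_div, hM'def, ENNReal.toReal_ofReal hM0.le]
        rw [div_le_iff₀ hM0]
        have hC0 : 0 ≤ C.toReal := ENNReal.toReal_nonneg
        rw [hMdef]
        have : C.toReal / ε * ε = C.toReal := div_mul_cancel₀ _ hε.ne'
        nlinarith
      linarith
    have h1 : (volume E).toReal ≤ 0 := by
      by_contra hc
      push_neg at hc
      have := key ((volume E).toReal / 2) (by linarith)
      linarith
    have h2 : (volume E).toReal = 0 := le_antisymm h1 ENNReal.toReal_nonneg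
    rcases (ENNReal.toReal_eq_zero_iff _).mp h2 with h3 | h3
    · exact h3
    · exact absurd h3 hEfin
  -- conclude
  have hg0 : ∀ᵐ x ∂(volume.restrict Ω), 0 < g x := by
    rw [ae_iff]
    have : {x | ¬ 0 < g x} = E' := by ext x; simp [hE'def, not_lt]
    rw [this, Measure.restrict_apply hE']
    exact main
  filter_upwards [hg0, hae] with x h1 h2
  rw [h2]
  exact h1
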